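/- Let k ≥ 3 be an odd natural number, let j = ⌊k/2⌋, and let A be the 2×2 rational matrix with rows (0, 2^(−j)) and (2^(j+1), 0). Then the exponent semigroup of A equals the additive submonoid of ℕ generated by 2 and k, i.e., S(A) = {2a + kb : a, b ∈ ℕ}. -/

import Mathlib

/-- The exponent semigroup of a square rational matrix: the set of natural
numbers `n` such that every entry of `A ^ n` is an integer. -/
def expSemigroup {ι : Type*} [Fintype ι] [DecidableEq ι]
    (A : Matrix ι ι ℚ) : Set ℕ :=
  {n | ∀ i j, ∃ z : ℤ, (A ^ n) i j = (z : ℚ)}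

theorem stmt_3 (k : ℕ) (hk : 3 ≤ k) (hodd : Odd k) (j : ℕ) (hj : j = k / 2) :
    expSemigroup !![(0 : ℚ), (2 : ℚ) ^ (-(j : ℤ)); (2 : ℚ) ^ (j + 1), 0]
      = {n : ℕ | ∃ a b : ℕ, n = 2 * a + k * b} := by
  obtain ⟨r, hr⟩ := hodd
  have hk1 : k = 2 * j + 1 := by omega
  have hj1 : 1 ≤ j := by omega
  set M : Matrix (Fin 2) (Fin 2) ℚ :=
    !![(0 : ℚ), (2 : ℚ) ^ (-(j : ℤ)); (2 : ℚ) ^ (j + 1), 0] with hM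
  have h2 : M ^ 2 = (2 : ℚ) • 1 := by
    rw [pow_two, hM]
    ext i i'
    fin_cases i <;> fin_cases i' <;>
      simp [Matrix.mul_apply, Fin.sum_univ_two, Matrix.one_apply, mul_comm]
    all_goals
      rw [pow_succ]
      field_simp
  have hpow_even : ∀ m : ℕ, M ^ (2 * m) = ((2 : ℚ) ^ m) • 1 := by
    intro m
    rw [pow_mul, h2, smul_pow, one_pow]
  have hpow_odd : ∀ m : ℕ, M ^ (2 * m + 1) = ((2 : ℚ) ^ m) • M := by
    intro m
    rw [pow_succ, hpow_even, smul_mul_assoc, one_mul]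
  ext n
  simp only [expSemigroup, Set.mem_setOf_eq]
  constructor
  · intro h
    rcases Nat.even_or_odd n with ⟨m, hm⟩ | ⟨m, hm⟩
    · exact ⟨m, 0, by omega⟩
    · -- n = 2m+1
      have hjm : j ≤ m := by
        by_contra hmj
        push_neg at hmj
        obtain ⟨z, hz⟩ := h 0 1
        rw [hm, hpow_odd] at hz
        simp [hM] at hz
        have hz2 : (z : ℚ) * 2 ^ (j - m) = 1 := by
          rw [← hz, mul_right_comm, ← pow_add, show m + (j - m) = j by omega,
            mul_inv_cancel₀ (by positivity)]
        have hz3 : z * 2 ^ (j - m) = 1 := by exact_mod_cast hz2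
        have hunit : IsUnit ((2 : ℤ) ^ (j - m)) :=
          IsUnit.of_mul_eq_one _ (by rw [mul_comm]; exact hz3)
        rw [Int.isUnit_iff] at hunit
        have h2le : (2 : ℤ) ≤ 2 ^ (j - m) := by
          calc (2:ℤ) = 2 ^ 1 := by ring
          _ ≤ 2 ^ (j - m) := by
            apply pow_le_pow_right₀ (by norm_num)
            omega
        omega
      exact ⟨m - j, 1, by omega⟩
  · rintro ⟨a, b, hab⟩
    rcases Nat.even_or_odd b with ⟨c, hc⟩ | ⟨c, hc⟩
    · have hn : n = 2 * (a + k * c) := by rw [hab, hc]; ring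
      intro i i'
      rw [hn, hpow_even]
      fin_cases i <;> fin_cases i' <;> simp [Matrix.one_apply]
      · exact ⟨2 ^ (a + k * c), by push_cast; ring⟩
      · exact ⟨0, by simp⟩
      · exact ⟨0, by simp⟩
      · exact ⟨2 ^ (a + k * c), by push_cast; ring⟩
    · have hn : n = 2 * (a + k * c + j) + 1 := by rw [hab, hc, hk1]; ring
      set m := a + k * c + j with hmdef
      have hjm : j ≤ m := by omega
      intro i i'
      rw [hn, hpow_odd]
      fin_cases i <;> fin_cases i' <;> simp [hM]
      · exact ⟨0, by simp⟩
      · refine ⟨2 ^ (m - j), ?_⟩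
        push_cast
        rw [mul_inv_eq_iff_eq_mul₀ (by positivity), ← pow_add]
        congr 1
        omega
      · exact ⟨2 ^ (m + j + 1), by push_cast; ring⟩
      · exact ⟨0, by simp⟩
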